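/- Let x = ∑_{i=1}^n ω^{α_i}·a_i and y = ∑_{j=1}^m ω^{β_j}·b_j be nonzero ordinals in Cantor normal form, and let k ≥ 0 be the maximal index such that α_i = β_i and a_i = b_i for all i ≤ k (k = 0 if there is none). Assume k < n and k < m. Then the left subtraction x ∸ y is given by: (1) if α_{k+1} < β_{k+1} then x ∸ y = 0; (2) if α_{k+1} > β_{k+1} then x ∸ y = ∑_{i=k+1}^n ω^{α_i}·a_i; (3) if α_{k+1} = β_{k+1} and a_{k+1} > b_{k+1} then x ∸ y = ω^{α_{k+1}}·(a_{k+1} − b_{k+1}) + ∑_{i=k+2}^n ω^{α_i}·a_i; (4) if α_{k+1} = β_{k+1} and a_{k+1} < b_{k+1} then x ∸ y = 0. -/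

import Mathlib

open Ordinal

/-- The value of a Cantor normal form expression `∑_{i<n} ω^(α i) · (a i)`,
with the summands added in order of increasing index. -/
noncomputable def CNFsum (n : ℕ) (α : ℕ → Ordinal) (a : ℕ → ℕ) : Ordinal :=
  ((List.range n).map fun i => ω ^ α i * (a i : Ordinal)).sum

namespace CnfSubAux

lemma CNFsum_congr {n : ℕ} {α α' : ℕ → Ordinal} {a a' : ℕ → ℕ}
    (h : ∀ i, i < n → α i = α' i ∧ a i = a' i) :
    CNFsum n α a = CNFsum n α' a' := by
  unfold CNFsum
  congr 1
  apply List.map_congr_left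
  intro i hi
  rw [List.mem_range] at hi
  rw [(h i hi).1, (h i hi).2]

lemma CNFsum_split {k n : ℕ} (h : k ≤ n) (α : ℕ → Ordinal) (a : ℕ → ℕ) :
    CNFsum n α a = CNFsum k α a +
      CNFsum (n - k) (fun i => α (k + i)) (fun i => a (k + i)) := by
  unfold CNFsum
  conv_lhs => rw [show n = k + (n - k) from (Nat.add_sub_cancel' h).symm]
  rw [List.range_add, List.map_append, List.sum_append, List.map_map]
  rfl

lemma CNFsum_tail {k n : ℕ} (h : k < n) (α : ℕ → Ordinal) (a : ℕ → ℕ) :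
    CNFsum (n - k) (fun i => α (k + i)) (fun i => a (k + i)) =
      ω ^ α k * (a k : Ordinal) +
        CNFsum (n - (k + 1)) (fun i => α (k + 1 + i)) (fun i => a (k + 1 + i)) := by
  have h1 := CNFsum_split (k := k) (n := n) h.le α a
  have h2 := CNFsum_split (k := k + 1) (n := n) h α a
  have h3 := CNFsum_split (k := k) (n := k + 1) (by omega) α a
  have h4 : CNFsum (k + 1 - k) (fun i => α (k + i)) (fun i => a (k + i)) =
      ω ^ α k * (a k : Ordinal) := by
    have hk1 : k + 1 - k = 1 := by omega
    rw [hk1]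
    simp [CNFsum, List.range_succ]
  rw [h4] at h3
  rw [h3, add_assoc] at h2
  rw [h2] at h1
  exact add_left_cancel h1.symm

lemma CNFsum_lt_opow {n : ℕ} {α : ℕ → Ordinal} {a : ℕ → ℕ} {δ : Ordinal}
    (h : ∀ i, i < n → α i < δ) : CNFsum n α a < ω ^ δ := by
  induction n with
  | zero =>
      simp only [CNFsum, List.range_zero, List.map_nil, List.sum_nil]
      exact opow_pos δ omega0_pos
  | succ n ih =>
      have hsum : CNFsum (n + 1) α a = CNFsum n α a + ω ^ α n * (a n : Ordinal) := by
        unfold CNFsum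
        rw [List.range_succ, List.map_append, List.sum_append]
        simp
      rw [hsum]
      apply principal_add_omega0_opow δ
      · exact ih fun i hi => h i (Nat.lt_succ_of_lt hi)
      · calc ω ^ α n * (a n : Ordinal) < ω ^ α n * ω :=
              (mul_lt_mul_iff_right₀ (opow_pos _ omega0_pos)).2 (nat_lt_omega0 _)
          _ = ω ^ (α n + 1) := by rw [add_one_eq_succ, opow_succ]
          _ ≤ ω ^ δ := opow_le_opow_right omega0_pos
              (by rw [add_one_eq_succ]; exact Order.succ_le_iff.2 (h n (Nat.lt_succ_self n)))

lemma absorb {c γ : Ordinal} {m : ℕ} (hc : c < ω ^ γ) (hm : 1 ≤ m) :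
    c + ω ^ γ * (m : Ordinal) = ω ^ γ * (m : Ordinal) := by
  have hm' : (m : Ordinal) = 1 + ((m - 1 : ℕ) : Ordinal) := by
    rw [← Nat.cast_one, ← Nat.cast_add, Nat.add_sub_cancel' hm]
  rw [hm', mul_add, mul_one, ← add_assoc, add_omega0_opow hc]

lemma absorb' {c γ r : Ordinal} {m : ℕ} (hc : c < ω ^ γ) (hm : 1 ≤ m) :
    c + (ω ^ γ * (m : Ordinal) + r) = ω ^ γ * (m : Ordinal) + r := by
  rw [← add_assoc, absorb hc hm]

lemma sub_absorb {y γ r : Ordinal} {m : ℕ} (hy : y < ω ^ γ) (hm : 1 ≤ m) :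
    (ω ^ γ * (m : Ordinal) + r) - y = ω ^ γ * (m : Ordinal) + r := by
  conv_lhs => rw [← absorb' hy hm (r := r)]
  exact Ordinal.add_sub_cancel _ _

lemma add_sub_add (a b c : Ordinal) : (a + b) - (a + c) = b - c := by
  rcases le_or_gt c b with h | h
  · conv_lhs => rw [← Ordinal.add_sub_cancel_of_le h, ← add_assoc]
    exact Ordinal.add_sub_cancel _ _
  · rw [Ordinal.sub_eq_zero_iff_le.2 h.le,
      Ordinal.sub_eq_zero_iff_le.2 (add_le_add_right h.le a)]

end CnfSubAux

open CnfSubAux in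
/-- Left subtraction of two nonzero ordinals given in Cantor normal form, where `k` is the
maximal index such that the two expressions agree on the first `k` terms (and both expressions
have more than `k` terms). -/
theorem cnf_sub (n m k : ℕ) (hn : 1 ≤ n) (hm : 1 ≤ m)
    (α β : ℕ → Ordinal) (a b : ℕ → ℕ)
    (hα : ∀ i j, i < j → j < n → α j < α i)
    (hβ : ∀ i j, i < j → j < m → β j < β i)
    (ha : ∀ i, i < n → 0 < a i) (hb : ∀ j, j < m → 0 < b j)
    (hkn : k < n) (hkm : k < m)
    (hpre : ∀ i, i < k → α i = β i ∧ a i = b i)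
    (hmax : ¬(α k = β k ∧ a k = b k)) :
    -- (1)
    (α k < β k → CNFsum n α a - CNFsum m β b = 0) ∧
    -- (2)
    (β k < α k → CNFsum n α a - CNFsum m β b =
      CNFsum (n - k) (fun i => α (k + i)) (fun i => a (k + i))) ∧
    -- (3)
    (α k = β k → b k < a k → CNFsum n α a - CNFsum m β b =
      ω ^ α k * ((a k - b k : ℕ) : Ordinal) +
        CNFsum (n - (k + 1)) (fun i => α (k + 1 + i)) (fun i => a (k + 1 + i))) ∧
    -- (4)
    (α k = β k → a k < b k → CNFsum n α a - CNFsum m β b = 0) := by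
  -- prefix splitting
  set X := CNFsum (n - k) (fun i => α (k + i)) (fun i => a (k + i)) with hX
  set Y := CNFsum (m - k) (fun i => β (k + i)) (fun i => b (k + i)) with hY
  have hsplit : CNFsum n α a - CNFsum m β b = X - Y := by
    rw [CNFsum_split hkn.le α a, CNFsum_split hkm.le β b,
      CNFsum_congr (α' := β) (a' := b) hpre, add_sub_add]
  -- tails decompositions
  have hnk : 1 ≤ n - k := Nat.le_sub_of_add_le (by omega)
  have hmk : 1 ≤ m - k := Nat.le_sub_of_add_le (by omega)
  set RX := CNFsum (n - (k + 1)) (fun i => α (k + 1 + i)) (fun i => a (k + 1 + i)) with hRX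
  set RY := CNFsum (m - (k + 1)) (fun i => β (k + 1 + i)) (fun i => b (k + 1 + i)) with hRY
  have hXc : X = ω ^ α k * (a k : Ordinal) + RX := by
    rw [hX, hRX]; exact CNFsum_tail hkn α a
  have hYc : Y = ω ^ β k * (b k : Ordinal) + RY := by
    rw [hY, hRY]; exact CNFsum_tail hkm β b
  have hRXlt : RX < ω ^ α k := by
    rw [hRX]
    exact CNFsum_lt_opow fun i hi => hα k (k + 1 + i) (by omega) (by omega)
  have hRYlt : RY < ω ^ β k := by
    rw [hRY]
    exact CNFsum_lt_opow fun i hi => hβ k (k + 1 + i) (by omega) (by omega)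
  refine ⟨fun h1 => ?_, fun h2 => ?_, fun he h3 => ?_, fun he h4 => ?_⟩
  · -- (1) α k < β k
    rw [hsplit, Ordinal.sub_eq_zero_iff_le]
    have hXlt : X < ω ^ β k := by
      rw [hX]
      refine CNFsum_lt_opow fun i hi => ?_
      rcases Nat.eq_zero_or_pos i with rfl | hi0
      · simpa using h1
      · exact lt_trans (hα k (k + i) (by omega) (by omega)) h1
    calc X ≤ ω ^ β k := hXlt.le
      _ ≤ ω ^ β k * (b k : Ordinal) := le_mul_of_one_le_right zero_le
            (by exact_mod_cast Nat.one_le_cast.2 (hb k hkm))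
      _ ≤ Y := hYc ▸ le_self_add
  · -- (2) β k < α k
    rw [hsplit]
    have hYlt : Y < ω ^ α k := by
      rw [hY]
      refine CNFsum_lt_opow fun i hi => ?_
      rcases Nat.eq_zero_or_pos i with rfl | hi0
      · simpa using h2
      · exact lt_trans (hβ k (k + i) (by omega) (by omega)) h2
    rw [hXc]
    exact sub_absorb hYlt (ha k hkn)
  · -- (3) α k = β k, b k < a k
    rw [hsplit, hXc, hYc, ← he]
    have hak : (a k : Ordinal) = (b k : Ordinal) + ((a k - b k : ℕ) : Ordinal) := by
      rw [← Nat.cast_add, Nat.add_sub_cancel' h3.le]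
    rw [hak, mul_add, add_assoc, add_sub_add]
    exact sub_absorb (he ▸ hRYlt) (by omega)
  · -- (4) α k = β k, a k < b k
    rw [hsplit, Ordinal.sub_eq_zero_iff_le, hXc, hYc, ← he]
    apply le_of_lt
    calc ω ^ α k * (a k : Ordinal) + RX
        < ω ^ α k * (a k : Ordinal) + ω ^ α k := add_lt_add_right hRXlt _
      _ = ω ^ α k * ((a k : Ordinal) + 1) := by rw [mul_add, mul_one]
      _ ≤ ω ^ α k * (b k : Ordinal) := by
          apply mul_le_mul_right
          exact_mod_cast Nat.succ_le_of_lt h4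
      _ ≤ ω ^ α k * (b k : Ordinal) + RY := le_self_add
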